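/- Consider the finite abstraction product game with finite nonempty sets X̂, Q, Û, Ŵ, accepting set F ⊆ Q, δ ∈ [0,1], row-stochastic transition function T̂, and nonempty set-valued map S as in the context. Define V̲_{*,n} : X̂ × Q → ℝ by V̲_{*,0}(x̂,q) = 1 if q ∈ F and 0 otherwise, and V̲_{*,n+1}(x̂,q) = 1 if q ∈ F, otherwise V̲_{*,n+1}(x̂,q) = min_{û∈Û} max_{ŵ∈Ŵ} ( (1−δ)·Σ_{x̂'∈X̂} (max_{q'∈S(q,x̂')} V̲_{*,n}(x̂',q'))·T̂(x̂,û,ŵ)(x̂') + δ ). Then for every horizon H ∈ ℕ and every (x̂,q) ∈ X̂ × Q, V̲_{*,H}(x̂,q) = min over Markov policies ρ for Player I over horizon H of the max over Markov policies λ for Player II over horizon H of V̲^{ρ,λ}_H(x̂,q), where both extrema over the finite sets of Markov policies are attained. -/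

import Mathlib

/-- Worst-case-violation cost-to-go `V̲^{ρ,λ}_n` of the finite abstraction product game under
Markov policies `ρ` (Player I) and `λ` (Player II) over horizon `H`:
`V̲^{ρ,λ}_0(x̂,q) = 1_F(q)`; `V̲^{ρ,λ}_{n+1}(x̂,q) = 1` if `q ∈ F`, otherwise
`V̲^{ρ,λ}_{n+1}(x̂,q) = (1−δ) Σ_{x̂'} (max_{q' ∈ S(q,x̂')} V̲^{ρ,λ}_n(x̂',q')) T̂(x̂,û,ŵ)(x̂') + δ`
with `û = ρ_{H−n−1}(x̂,q)` and `ŵ = λ_{H−n−1}(x̂,q,û)`. -/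
noncomputable def VlowPol {X Q U W : Type*} [Fintype X] [DecidableEq Q]
    (F : Finset Q) (δ : ℝ) (T : X → U → W → X → ℝ) (S : Q → X → Finset Q)
    (hS : ∀ (q : Q) (x' : X), (S q x').Nonempty)
    (ρ : ℕ → X → Q → U) (lam : ℕ → X → Q → U → W) (H : ℕ) : ℕ → X → Q → ℝ
  | 0 => fun _ q => if q ∈ F then 1 else 0
  | n + 1 => fun x q =>
      if q ∈ F then 1
      else (1 - δ) * (∑ x' : X,
        ((S q x').sup' (hS q x') fun q' => VlowPol F δ T S hS ρ lam H n x' q') *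
          T x (ρ (H - n - 1) x q) (lam (H - n - 1) x q (ρ (H - n - 1) x q)) x') + δ

/-- Optimal (min-max) Bellman recursion `V̲_{*,n}` of the finite abstraction product game:
`V̲_{*,0}(x̂,q) = 1_F(q)`; `V̲_{*,n+1}(x̂,q) = 1` if `q ∈ F`, otherwise
`V̲_{*,n+1}(x̂,q) = min_{û∈Û} max_{ŵ∈Ŵ} ((1−δ) Σ_{x̂'} (max_{q'∈S(q,x̂')} V̲_{*,n}(x̂',q')) T̂(x̂,û,ŵ)(x̂') + δ)`. -/
noncomputable def VlowStarGame {X Q U W : Type*} [Fintype X]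
    [Fintype U] [Nonempty U] [Fintype W] [Nonempty W] [DecidableEq Q]
    (F : Finset Q) (δ : ℝ) (T : X → U → W → X → ℝ) (S : Q → X → Finset Q)
    (hS : ∀ (q : Q) (x' : X), (S q x').Nonempty) : ℕ → X → Q → ℝ
  | 0 => fun _ q => if q ∈ F then 1 else 0
  | n + 1 => fun x q =>
      if q ∈ F then 1
      else Finset.univ.inf' Finset.univ_nonempty fun u : U =>
        Finset.univ.sup' Finset.univ_nonempty fun w : W =>
          (1 - δ) * (∑ x' : X,
            ((S q x').sup' (hS q x') fun q' => VlowStarGame F δ T S hS n x' q') * T x u w x') + δ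

/-- For every horizon `H` and every `(x̂,q)`, the value `V̲_{*,H}(x̂,q)` of the
min-max Bellman recursion equals the min over Markov policies `ρ` of Player I of the max over
Markov policies `λ` of Player II of `V̲^{ρ,λ}_H(x̂,q)`, both extrema being attained: there is a
policy `ρ` whose worst-case value against every `λ` is at most `V̲_{*,H}(x̂,q)`, and against
every `ρ` Player II has a policy `λ` pushing the value up to at least `V̲_{*,H}(x̂,q)`. -/
theorem VlowStarGame_eq_minmax
    {X Q U W : Type*} [Fintype X] [Fintype Q] [Fintype U] [Fintype W]
    [Nonempty X] [Nonempty Q] [Nonempty U] [Nonempty W] [DecidableEq Q]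
    (F : Finset Q) (δ : ℝ) (hδ0 : 0 ≤ δ) (hδ1 : δ ≤ 1)
    (T : X → U → W → X → ℝ) (S : Q → X → Finset Q)
    (hS : ∀ (q : Q) (x' : X), (S q x').Nonempty)
    (hT0 : ∀ (x : X) (u : U) (w : W) (x' : X), 0 ≤ T x u w x')
    (hT1 : ∀ (x : X) (u : U) (w : W), ∑ x' : X, T x u w x' = 1) :
    ∀ (H : ℕ) (x : X) (q : Q),
      (∃ ρ : ℕ → X → Q → U, ∀ lam : ℕ → X → Q → U → W,
          VlowPol F δ T S hS ρ lam H H x q ≤ VlowStarGame F δ T S hS H x q) ∧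
      (∀ ρ : ℕ → X → Q → U, ∃ lam : ℕ → X → Q → U → W,
          VlowStarGame F δ T S hS H x q ≤ VlowPol F δ T S hS ρ lam H H x q) := by
  classical
  intro H x q
  constructor
  · -- Player I optimal policy
    choose ρ hρmem hρ using fun (k : ℕ) (x : X) (q : Q) =>
      Finset.exists_mem_eq_inf' (Finset.univ_nonempty (α := U))
        (fun u : U => Finset.univ.sup' Finset.univ_nonempty fun w : W =>
          (1 - δ) * (∑ x' : X,
            ((S q x').sup' (hS q x') fun q' =>
              VlowStarGame F δ T S hS (H - k - 1) x' q') * T x u w x') + δ)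
    refine ⟨ρ, fun lam => ?_⟩
    have key : ∀ n, n ≤ H → ∀ x q,
        VlowPol F δ T S hS ρ lam H n x q ≤ VlowStarGame F δ T S hS n x q := by
      intro n
      induction n with
      | zero => intro _ x q; simp [VlowPol, VlowStarGame]
      | succ n ih =>
        intro hn x q
        have ihn := ih (Nat.le_of_succ_le hn)
        have hk : H - (H - n - 1) - 1 = n := by omega
        simp only [VlowPol, VlowStarGame]
        by_cases hq : q ∈ F
        · simp [hq]
        · simp only [hq, if_false]
          set u := ρ (H - n - 1) x q with hu
          set w := lam (H - n - 1) x q u with hw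
          have step1 : (1 - δ) * (∑ x' : X,
              ((S q x').sup' (hS q x') fun q' =>
                VlowPol F δ T S hS ρ lam H n x' q') * T x u w x') + δ ≤
              (1 - δ) * (∑ x' : X,
              ((S q x').sup' (hS q x') fun q' =>
                VlowStarGame F δ T S hS n x' q') * T x u w x') + δ := by
            refine add_le_add ?_ le_rfl
            apply mul_le_mul_of_nonneg_left _ (by linarith)
            apply Finset.sum_le_sum
            intro x' _
            apply mul_le_mul_of_nonneg_right _ (hT0 x u w x')
            exact Finset.sup'_le _ _ fun q' hq' =>
              (ihn x' q').trans (Finset.le_sup' _ hq')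
          refine step1.trans ?_
          have step2 := Finset.le_sup' (f := fun w' : W =>
              (1 - δ) * (∑ x' : X,
              ((S q x').sup' (hS q x') fun q' =>
                VlowStarGame F δ T S hS n x' q') * T x u w' x') + δ)
            (Finset.mem_univ w)
          refine step2.trans ?_
          have heq := hρ (H - n - 1) x q
          rw [hk] at heq
          exact heq.ge
    exact key H le_rfl x q
  · -- Player II best response
    intro ρ
    choose lam hlammem hlam using fun (k : ℕ) (x : X) (q : Q) (u : U) =>
      Finset.exists_mem_eq_sup' (Finset.univ_nonempty (α := W))
        (fun w : W =>
          (1 - δ) * (∑ x' : X,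
            ((S q x').sup' (hS q x') fun q' =>
              VlowStarGame F δ T S hS (H - k - 1) x' q') * T x u w x') + δ)
    refine ⟨lam, ?_⟩
    have key : ∀ n, n ≤ H → ∀ x q,
        VlowStarGame F δ T S hS n x q ≤ VlowPol F δ T S hS ρ lam H n x q := by
      intro n
      induction n with
      | zero => intro _ x q; simp [VlowPol, VlowStarGame]
      | succ n ih =>
        intro hn x q
        have ihn := ih (Nat.le_of_succ_le hn)
        have hk : H - (H - n - 1) - 1 = n := by omega
        simp only [VlowPol, VlowStarGame]
        by_cases hq : q ∈ F
        · simp [hq]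
        · simp only [hq, if_false]
          set u := ρ (H - n - 1) x q with hu
          set w := lam (H - n - 1) x q u with hw
          have step1 := Finset.inf'_le (f := fun u' : U =>
              Finset.univ.sup' Finset.univ_nonempty fun w' : W =>
                (1 - δ) * (∑ x' : X,
                ((S q x').sup' (hS q x') fun q' =>
                  VlowStarGame F δ T S hS n x' q') * T x u' w' x') + δ)
            (Finset.mem_univ u)
          refine step1.trans ?_
          have heq := hlam (H - n - 1) x q u
          rw [hk] at heq
          refine heq.le.trans ?_
          refine add_le_add ?_ le_rfl
          apply mul_le_mul_of_nonneg_left _ (by linarith)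
          apply Finset.sum_le_sum
          intro x' _
          apply mul_le_mul_of_nonneg_right _ (hT0 x u w x')
          exact Finset.sup'_le _ _ fun q' hq' =>
            (ihn x' q').trans (Finset.le_sup' _ hq')
    exact key H le_rfl x q
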